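/- Let G be a dense 3-graph on vertex set [n] and let x = (x_1,…,x_n) be an optimum weight vector for G with x_i > 0 for every i ∈ [n]. If x_i ≥ 1/3 for some i, then λ(G) ≤ 2/27. -/

import Mathlib

open Finset

/-- An `r`-graph: a finite vertex set together with a finite set of edges,
each edge being a subset of the vertex set. (Uniformity is a separate predicate.) -/
structure HyperGraph where
  verts : Finset ℕ
  edges : Finset (Finset ℕ)
  edge_sub : ∀ e ∈ edges, e ⊆ verts

namespace HyperGraph

/-- `G` is `r`-uniform: every edge has `r` vertices. -/
def IsUniform (G : HyperGraph) (r : ℕ) : Prop := ∀ e ∈ G.edges, e.card = r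

def IsSubgraph (H G : HyperGraph) : Prop := H.verts ⊆ G.verts ∧ H.edges ⊆ G.edges

def IsProperSubgraph (H G : HyperGraph) : Prop := H.IsSubgraph G ∧ H ≠ G

/-- `G` contains a subgraph isomorphic to `F` (an injective copy of `F`). -/
def HasCopy (G F : HyperGraph) : Prop :=
  ∃ f : ℕ → ℕ, Set.InjOn f ↑F.verts ∧ (∀ v ∈ F.verts, f v ∈ G.verts) ∧
    ∀ e ∈ F.edges, e.image f ∈ G.edges

/-- `G` is `F`-free: it contains no subgraph isomorphic to `F`. -/
def Free (G F : HyperGraph) : Prop := ¬ G.HasCopy F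

/-- A feasible weight vector: nonnegative weights summing to 1 over the vertex set. -/
def IsWeighting (G : HyperGraph) (w : ℕ → ℝ) : Prop :=
  (∀ i, 0 ≤ w i) ∧ ∑ i ∈ G.verts, w i = 1

/-- The Lagrangian polynomial `λ(G, w) = Σ_{e ∈ E(G)} Π_{i ∈ e} w i`. -/
def lagrangianAt (G : HyperGraph) (w : ℕ → ℝ) : ℝ := ∑ e ∈ G.edges, ∏ i ∈ e, w i

/-- The Lagrangian `λ(G)`: the maximum of `λ(G, w)` over feasible weight vectors. -/
noncomputable def lagrangian (G : HyperGraph) : ℝ :=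
  sSup {x : ℝ | ∃ w : ℕ → ℝ, G.IsWeighting w ∧ x = G.lagrangianAt w}

/-- `G` is dense: every proper subgraph has strictly smaller Lagrangian. -/
def IsDense (G : HyperGraph) : Prop :=
  ∀ H : HyperGraph, H.IsProperSubgraph G → H.lagrangian < G.lagrangian

/-- The Lagrangian density `π_λ(F) = sup { r! · λ(G) : G an F-free r-graph }`. -/
noncomputable def lagrangianDensity (r : ℕ) (F : HyperGraph) : ℝ :=
  sSup {x : ℝ | ∃ G : HyperGraph, G.IsUniform r ∧ G.Free F ∧
    x = (r.factorial : ℝ) * G.lagrangian}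

/-- The subgraph of `G` induced by `A`. -/
def induce (G : HyperGraph) (A : Finset ℕ) : HyperGraph where
  verts := A
  edges := G.edges.filter (fun e => e ⊆ A)
  edge_sub := fun _ he => (Finset.mem_filter.mp he).2

/-- The link `N(a,b) = { c : {a,b,c} ∈ E(G) }`. -/
def link2 (G : HyperGraph) (a b : ℕ) : Set ℕ := {c | ({a, b, c} : Finset ℕ) ∈ G.edges}

/-- `{a, b}` is a good pair to `A`. -/
def IsGoodPair (G : HyperGraph) (A : Finset ℕ) (a b : ℕ) : Prop :=
  a ≠ b ∧ a ∈ G.verts ∧ b ∈ G.verts ∧ a ∉ A ∧ b ∉ A ∧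
    ∀ k ∈ A, G.link2 a k = {b} ∧ G.link2 b k = {a}

/-- The pairs `{a 1, b 1}, …, {a s, b s}` are good pairs to `A`
partitioning `V(G) ∖ A`. -/
def GoodPartition (G : HyperGraph) (A : Finset ℕ) (s : ℕ) (a b : ℕ → ℕ) : Prop :=
  A ⊆ G.verts ∧
  (∀ v, v ∈ G.verts \ A ↔ ∃ i ∈ Finset.Icc 1 s, v = a i ∨ v = b i) ∧
  (∀ i ∈ Finset.Icc 1 s, ∀ j ∈ Finset.Icc 1 s, i ≠ j →
    ({a i, b i} : Finset ℕ) ∩ {a j, b j} = ∅) ∧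
  (∀ i ∈ Finset.Icc 1 s, G.IsGoodPair A (a i) (b i))

/-- `G` is a good graph to `A`. -/
def IsGoodGraph (G : HyperGraph) (A : Finset ℕ) : Prop := ∃ s a b, G.GoodPartition A s a b

end HyperGraph

open HyperGraph

/-- The complete `r`-graph `K_t^r` on `t` vertices. -/
def completeHyperGraph (t r : ℕ) : HyperGraph where
  verts := Finset.Icc 1 t
  edges := (Finset.Icc 1 t).powersetCard r
  edge_sub := fun _ he => (Finset.mem_powersetCard.mp he).1

/-- `K_t^{3-}`: the complete 3-graph on `t` vertices with one edge removed. -/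
def completeMinus (t : ℕ) : HyperGraph where
  verts := Finset.Icc 1 t
  edges := ((Finset.Icc 1 t).powersetCard 3).filter (fun e => e ≠ ({1,2,3} : Finset ℕ))
  edge_sub := fun _ he => (Finset.mem_powersetCard.mp (Finset.mem_filter.mp he).1).1

/-- The generalized triangle `F_5 = {123, 124, 345}`. -/
def F5 : HyperGraph where
  verts := {1,2,3,4,5}
  edges := {{1,2,3},{1,2,4},{3,4,5}}
  edge_sub := by decide

/-- The 3-uniform linear cycle of length 3: `C_3^3 = {123, 345, 561}`. -/
def C33 : HyperGraph where
  verts := {1,2,3,4,5,6}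
  edges := {{1,2,3},{3,4,5},{5,6,1}}
  edge_sub := by decide

open scoped Classical in
/-- The 3-uniform linear cycle `C_t^3` of length `t`, with vertex set `[2t]` and
edges `{123, 345, …, (2t-3)(2t-2)(2t-1), (2t-1)(2t)1}`. -/
noncomputable def linearCycle (t : ℕ) : HyperGraph where
  verts := Finset.Icc 1 (2*t)
  edges := ((Finset.Icc 1 (2*t)).powersetCard 3).filter
    (fun e => (∃ k < t - 1, e = ({2*k+1, 2*k+2, 2*k+3} : Finset ℕ)) ∨
      e = ({2*t-1, 2*t, 1} : Finset ℕ))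
  edge_sub := fun _ he => (Finset.mem_powersetCard.mp (Finset.mem_filter.mp he).1).1

/-- The 3-graph `S_{2,t}` with vertex set `[t+2]` and edges `{12k : 3 ≤ k ≤ t+2}`. -/
def S2 (t : ℕ) : HyperGraph where
  verts := Finset.Icc 1 (t+2)
  edges := (Finset.Icc 3 (t+2)).image (fun k => ({1,2,k} : Finset ℕ))
  edge_sub := by
    intro e he
    simp only [Finset.mem_image] at he
    obtain ⟨k, hk, rfl⟩ := he
    simp only [Finset.mem_Icc] at hk
    intro x hx
    simp only [Finset.mem_insert, Finset.mem_singleton] at hx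
    simp only [Finset.mem_Icc]
    rcases hx with rfl | rfl | rfl <;> omega

/-- `F` is (up to relabeling) the disjoint union `G ⊔ H`. -/
def IsDisjointUnion (F G H : HyperGraph) : Prop :=
  ∃ f g : ℕ → ℕ, Set.InjOn f ↑G.verts ∧ Set.InjOn g ↑H.verts ∧
    Disjoint (G.verts.image f) (H.verts.image g) ∧
    F.verts = G.verts.image f ∪ H.verts.image g ∧
    F.edges = G.edges.image (fun e => e.image f) ∪ H.edges.image (fun e => e.image g)

/-- An `r`-graph `H` on `t` vertices is perfect if `π_λ(H) = r! · λ(K_{t-1}^r)`. -/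
def IsPerfect (r : ℕ) (H : HyperGraph) : Prop :=
  lagrangianDensity r H =
    (r.factorial : ℝ) * (completeHyperGraph (H.verts.card - 1) r).lagrangian

/-- The Turán number `ex(n, F)` for `r`-graphs on `n` vertices. -/
noncomputable def exNum (n r : ℕ) (F : HyperGraph) : ℕ :=
  sSup {m : ℕ | ∃ G : HyperGraph, G.IsUniform r ∧ G.verts.card = n ∧ G.Free F ∧
    m = G.edges.card}

/-- The defining property of an edge of `O_s`. -/
def OsPred (s : ℕ) (e : Finset ℕ) : Prop :=
  ∃ i ∈ Finset.Icc 1 s, ∃ j ∈ Finset.Icc 1 s, i ≠ j ∧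
    (e = ({2*i-1, 2*i, 2*j-1} : Finset ℕ) ∨ e = ({2*i-1, 2*i, 2*j} : Finset ℕ))

instance (s : ℕ) : DecidablePred (OsPred s) := fun e => by
  unfold OsPred; infer_instance

/-- The 3-graph `O_s` on vertices `a_i = 2i-1`, `b_i = 2i` (`1 ≤ i ≤ s`) with edges
`a_i b_i a_j` and `a_i b_i b_j` for `i ≠ j`. -/
def Os (s : ℕ) : HyperGraph where
  verts := Finset.Icc 1 (2*s)
  edges := ((Finset.Icc 1 (2*s)).powersetCard 3).filter (OsPred s)
  edge_sub := fun _ he => (Finset.mem_powersetCard.mp (Finset.mem_filter.mp he).1).1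

/-- `s = ⌈r^{r-1} / (2 (r-1)!)⌉`. -/
def sVal (r : ℕ) : ℕ := ⌈(r : ℚ)^(r-1) / (2 * ((r-1).factorial : ℚ))⌉₊

/-- The vertex `a_i`, realized as the natural number `r - 2 + i`. -/
def aVert (r i : ℕ) : ℕ := r - 2 + i

/-- The vertex `m_j`: a fresh vertex distinct from `1, …, r-2, a_1, a_2, a_3`. -/
def mVert (r j : ℕ) : ℕ := r + 1 + j

/-- The edge `e_j = {1, 2, …, r-2, a_1, a_{j+1}}`. -/
def eEdge (r j : ℕ) : Finset ℕ := Finset.Icc 1 (r-2) ∪ {aVert r 1, aVert r (j+1)}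

/-- The edge `{a_2, a_3, 1, …, i, m_1, …, m_{r-i-2}}` (for `i = 0` this is
`{a_2, a_3, m_1, …, m_{r-2}}`). -/
def thirdEdge (r i : ℕ) : Finset ℕ :=
  {aVert r 2, aVert r 3} ∪ Finset.Icc 1 i ∪ (Finset.Icc 1 (r - i - 2)).image (mVert r)

/-- The `r`-graph `F_i^r` with edges `e_1`, `e_2` and the third edge above. -/
def Fgraph (r i : ℕ) : HyperGraph where
  verts := eEdge r 1 ∪ eEdge r 2 ∪ thirdEdge r i
  edges := {eEdge r 1, eEdge r 2, thirdEdge r i}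
  edge_sub := by
    intro e he
    simp only [Finset.mem_insert, Finset.mem_singleton] at he
    rcases he with rfl | rfl | rfl
    · exact Finset.subset_union_left.trans Finset.subset_union_left
    · exact Finset.subset_union_right.trans Finset.subset_union_left
    · exact Finset.subset_union_right



example (T : Finset ℕ) (f : ℕ → ℝ) (a : ℕ) (ha : a ∉ T) : True := by
  have := Finset.powersetCard_succ_insert (x := a) (s := T) ha 1
  have h2 : ∀ S ∈ T.powersetCard 1, ∏ k ∈ insert a S, f k = f a * ∏ k ∈ S, f k := by
    intro S hS
    rw [Finset.prod_insert]
    intro haS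
    exact ha ((Finset.mem_powersetCard.mp hS).1 haS)
  trivial

lemma pair_sum_bound (T : Finset ℕ) (f : ℕ → ℝ) (hf : ∀ k, 0 ≤ f k) :
    2 * ∑ S ∈ T.powersetCard 2, ∏ k ∈ S, f k ≤ (∑ k ∈ T, f k) ^ 2 := by
  induction T using Finset.induction with
  | empty =>
    rw [Finset.powersetCard_eq_empty.mpr (by simp)]
    simp
  | insert _ _ ha ih =>
    rename_i a T
    have hnn : (0:ℝ) ≤ ∑ k ∈ T, f k := Finset.sum_nonneg fun k _ => hf k
    rw [Finset.powersetCard_succ_insert ha, Finset.sum_union, Finset.sum_insert ha]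
    · have himg : ∑ S ∈ (T.powersetCard 1).image (insert a), ∏ k ∈ S, f k
          = f a * ∑ k ∈ T, f k := by
      -- sum over image = sum over powersetCard 1 of prod insert
        rw [Finset.sum_image, Finset.powersetCard_one, Finset.sum_map]
        · simp only [Function.Embedding.coeFn_mk]
          rw [Finset.mul_sum]
          apply Finset.sum_congr rfl
          intro b hb
          rw [Finset.prod_insert (by simp; rintro rfl; exact ha hb),
            Finset.prod_singleton]
        · intro S hS S' hS' hins
          have hSa : a ∉ S := fun h => ha ((Finset.mem_powersetCard.mp hS).1 h)
          have hS'a : a ∉ S' := fun h => ha ((Finset.mem_powersetCard.mp hS').1 h)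
          rw [← Finset.erase_insert hSa, ← Finset.erase_insert hS'a, hins]
      rw [himg]
      nlinarith [hf a, ih]
    · rw [Finset.disjoint_left]
      intro S hS hS'
      obtain ⟨S', hS', rfl⟩ := Finset.mem_image.mp hS'
      exact ha ((Finset.mem_powersetCard.mp hS).1 (Finset.mem_insert_self _ _))

lemma prod_update_update (x : ℕ → ℝ) (i j : ℕ) (hij : i ≠ j) (ε : ℝ) (e : Finset ℕ) :
    (∏ k ∈ e, Function.update (Function.update x i (x i - ε)) j (x j + ε) k)
    = ∏ k ∈ e, x k
      + ε * (if j ∈ e then ∏ k ∈ e.erase j, x k else 0)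
      - ε * (if i ∈ e then ∏ k ∈ e.erase i, x k else 0)
      - ε^2 * (if i ∈ e ∧ j ∈ e then ∏ k ∈ (e.erase i).erase j, x k else 0) := by
  classical
  set y := Function.update (Function.update x i (x i - ε)) j (x j + ε) with hy
  have hyk : ∀ k, k ≠ i → k ≠ j → y k = x k := by
    intro k hki hkj
    simp [hy, Function.update_of_ne hkj, Function.update_of_ne hki]
  have hyi : y i = x i - ε := by
    simp [hy, Function.update_of_ne hij]
  have hyj : y j = x j + ε := by simp [hy]
  by_cases hi : i ∈ e <;> by_cases hj : j ∈ e
  · have hjei : j ∈ e.erase i := Finset.mem_erase.mpr ⟨Ne.symm hij, hj⟩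
    have hiej : i ∈ e.erase j := Finset.mem_erase.mpr ⟨hij, hi⟩
    have hQ : ∏ k ∈ (e.erase i).erase j, y k = ∏ k ∈ (e.erase i).erase j, x k :=
      Finset.prod_congr rfl (fun k hk =>
        hyk k (Finset.ne_of_mem_erase (Finset.mem_of_mem_erase hk))
          (Finset.ne_of_mem_erase hk))
    rw [if_pos hi, if_pos hj, if_pos ⟨hi, hj⟩,
      ← Finset.mul_prod_erase e y hi, ← Finset.mul_prod_erase _ y hjei, hQ, hyi, hyj,
      ← Finset.mul_prod_erase e x hi, ← Finset.mul_prod_erase (e.erase i) x hjei,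
      ← Finset.mul_prod_erase (e.erase j) x hiej, Finset.erase_right_comm]
    ring
  · have hQ : ∏ k ∈ e.erase i, y k = ∏ k ∈ e.erase i, x k :=
      Finset.prod_congr rfl (fun k hk =>
        hyk k (Finset.ne_of_mem_erase hk)
          (fun h => hj (h ▸ Finset.mem_of_mem_erase hk)))
    rw [if_pos hi, if_neg hj, if_neg (by tauto),
      ← Finset.mul_prod_erase e y hi, hQ, hyi, ← Finset.mul_prod_erase e x hi]
    ring
  · have hQ : ∏ k ∈ e.erase j, y k = ∏ k ∈ e.erase j, x k :=
      Finset.prod_congr rfl (fun k hk =>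
        hyk k (fun h => hi (h ▸ Finset.mem_of_mem_erase hk))
          (Finset.ne_of_mem_erase hk))
    rw [if_neg hi, if_pos hj, if_neg (by tauto),
      ← Finset.mul_prod_erase e y hj, hQ, hyj, ← Finset.mul_prod_erase e x hj]
    ring
  · have hQ : ∏ k ∈ e, y k = ∏ k ∈ e, x k :=
      Finset.prod_congr rfl (fun k hk =>
        hyk k (fun h => hi (h ▸ hk)) (fun h => hj (h ▸ hk)))
    rw [if_neg hi, if_neg hj, if_neg (by tauto), hQ]
    ring

lemma lag_shift (G : HyperGraph) (x : ℕ → ℝ) (i j : ℕ) (hij : i ≠ j) (ε : ℝ) :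
    G.lagrangianAt (Function.update (Function.update x i (x i - ε)) j (x j + ε)) =
    G.lagrangianAt x
      + ε * ∑ e ∈ G.edges.filter (fun e => j ∈ e), ∏ k ∈ e.erase j, x k
      - ε * ∑ e ∈ G.edges.filter (fun e => i ∈ e), ∏ k ∈ e.erase i, x k
      - ε ^ 2 * ∑ e ∈ G.edges.filter (fun e => i ∈ e ∧ j ∈ e),
          ∏ k ∈ (e.erase i).erase j, x k := by
  classical
  unfold HyperGraph.lagrangianAt
  rw [Finset.sum_filter, Finset.sum_filter, Finset.sum_filter,
    Finset.mul_sum, Finset.mul_sum, Finset.mul_sum,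
    ← Finset.sum_add_distrib, ← Finset.sum_sub_distrib, ← Finset.sum_sub_distrib]
  apply Finset.sum_congr rfl
  intro e _
  rw [prod_update_update x i j hij ε e]

/-- Every value of the Lagrangian polynomial at a weighting is at most `λ(G)`. -/
lemma le_lagrangian (G : HyperGraph) (w : ℕ → ℝ) (hw : G.IsWeighting w) :
    G.lagrangianAt w ≤ G.lagrangian := by
  apply le_csSup
  · refine ⟨(G.edges.card : ℝ), ?_⟩
    rintro r ⟨u, hu, rfl⟩
    have hub : ∀ k ∈ G.verts, u k ≤ 1 := by
      intro k hk
      calc u k ≤ ∑ l ∈ G.verts, u l := Finset.single_le_sum (fun l _ => hu.1 l) hk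
        _ = 1 := hu.2
    calc G.lagrangianAt u = ∑ e ∈ G.edges, ∏ k ∈ e, u k := rfl
      _ ≤ ∑ e ∈ G.edges, 1 := by
          apply Finset.sum_le_sum
          intro e he
          exact Finset.prod_le_one (fun k _ => hu.1 k)
            (fun k hk => hub k (G.edge_sub e he hk))
      _ = (G.edges.card : ℝ) := by simp
  · exact ⟨w, hw, rfl⟩

/-- if a dense 3-graph on `[n]` has an optimum weight vector with all
entries positive and some entry at least `1/3`, then `λ(G) ≤ 2/27`. -/
theorem dense_large_weight (n : ℕ) (G : HyperGraph) (h3 : G.IsUniform 3)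
    (hv : G.verts = Finset.Icc 1 n) (hd : G.IsDense)
    (x : ℕ → ℝ) (hw : G.IsWeighting x) (hopt : G.lagrangianAt x = G.lagrangian)
    (hpos : ∀ i ∈ G.verts, 0 < x i) (hbig : ∃ i ∈ G.verts, (1 : ℝ) / 3 ≤ x i) :
    G.lagrangian ≤ 2 / 27 := by
  classical
  obtain ⟨i, hiv, hxi⟩ := hbig
  -- notation for partial derivatives
  set D : ℕ → ℝ := fun j => ∑ e ∈ G.edges.filter (fun e => j ∈ e), ∏ k ∈ e.erase j, x k
    with hD
  have hDnn : ∀ j, 0 ≤ D j := by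
    intro j
    apply Finset.sum_nonneg
    intro e _
    exact Finset.prod_nonneg (fun k _ => hw.1 k)
  -- Euler identity : ∑_{j ∈ V} x j * D j = 3 λ(G,x)
  have heuler : ∑ j ∈ G.verts, x j * D j = 3 * G.lagrangianAt x := by
    have h1 : ∀ j, x j * D j
        = ∑ e ∈ G.edges, (if j ∈ e then x j * ∏ k ∈ e.erase j, x k else 0) := by
      intro j
      rw [hD]
      simp only [Finset.mul_sum, Finset.sum_filter]
      apply Finset.sum_congr rfl
      intro e _
      by_cases h : j ∈ e <;> simp [h]
    calc ∑ j ∈ G.verts, x j * D j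
        = ∑ j ∈ G.verts, ∑ e ∈ G.edges,
            (if j ∈ e then x j * ∏ k ∈ e.erase j, x k else 0) := by
          exact Finset.sum_congr rfl (fun j _ => h1 j)
      _ = ∑ e ∈ G.edges, ∑ j ∈ G.verts,
            (if j ∈ e then x j * ∏ k ∈ e.erase j, x k else 0) := Finset.sum_comm
      _ = ∑ e ∈ G.edges, ∑ j ∈ G.verts.filter (fun j => j ∈ e), ∏ k ∈ e, x k := by
          apply Finset.sum_congr rfl
          intro e _
          rw [Finset.sum_filter]
          apply Finset.sum_congr rfl
          intro j _
          split
          · rename_i hj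
            rw [Finset.mul_prod_erase e x hj]
          · rfl
      _ = ∑ e ∈ G.edges, ∑ j ∈ e, ∏ k ∈ e, x k := by
          apply Finset.sum_congr rfl
          intro e he
          have hfe : G.verts.filter (fun j => j ∈ e) = e := by
            ext j
            simp only [Finset.mem_filter]
            exact ⟨fun h => h.2, fun h => ⟨G.edge_sub e he h, h⟩⟩
          rw [hfe]
      _ = ∑ e ∈ G.edges, 3 * ∏ k ∈ e, x k := by
          apply Finset.sum_congr rfl
          intro e he
          rw [Finset.sum_const, h3 e he]
          push_cast
          ring
      _ = 3 * G.lagrangianAt x := by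
          rw [HyperGraph.lagrangianAt, Finset.mul_sum]
  -- D j ≤ D i for every vertex j
  have hmax : ∀ j ∈ G.verts, D j ≤ D i := by
    intro j hjv
    by_contra hlt
    push_neg at hlt
    have hij : i ≠ j := by rintro rfl; exact lt_irrefl _ hlt
    set c : ℝ := ∑ e ∈ G.edges.filter (fun e => i ∈ e ∧ j ∈ e),
      ∏ k ∈ (e.erase i).erase j, x k with hc
    have hcnn : 0 ≤ c :=
      Finset.sum_nonneg (fun e _ => Finset.prod_nonneg (fun k _ => hw.1 k))
    set ε : ℝ := min (x i) ((D j - D i) / (c + 1)) with hε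
    have hε0 : 0 < ε := by
      apply lt_min (hpos i hiv)
      apply div_pos (by linarith) (by linarith)
    have hεxi : ε ≤ x i := min_le_left _ _
    have hεc : ε * c < D j - D i := by
      have h1 : ε ≤ (D j - D i) / (c + 1) := min_le_right _ _
      have h2 : ε * c ≤ (D j - D i) / (c + 1) * c :=
        mul_le_mul_of_nonneg_right h1 hcnn
      have h3' : (D j - D i) / (c + 1) * c < D j - D i := by
        rw [div_mul_eq_mul_div, div_lt_iff₀ (by linarith)]
        nlinarith
      linarith
    -- the new weighting
    set y : ℕ → ℝ := Function.update (Function.update x i (x i - ε)) j (x j + ε)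
      with hy
    have hyw : G.IsWeighting y := by
      constructor
      · intro k
        rcases eq_or_ne k j with rfl | hkj
        · rw [hy, Function.update_self]
          have := (hw.1 k); linarith
        · rw [hy, Function.update_of_ne hkj]
          rcases eq_or_ne k i with rfl | hki
          · rw [Function.update_self]; linarith
          · rw [Function.update_of_ne hki]; exact hw.1 k
      · have hie : i ∈ G.verts.erase j := Finset.mem_erase.mpr ⟨hij, hiv⟩
        rw [hy, Finset.sum_update_of_mem hjv, Finset.sdiff_singleton_eq_erase,
          Finset.sum_update_of_mem hie, Finset.sdiff_singleton_eq_erase]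
        have h5 : ∑ k ∈ G.verts, x k
            = x j + (x i + ∑ k ∈ (G.verts.erase j).erase i, x k) := by
          rw [Finset.add_sum_erase _ x hie, Finset.add_sum_erase _ x hjv]
        rw [hw.2] at h5
        linarith
    have hgt : G.lagrangianAt y > G.lagrangianAt x := by
      rw [hy, lag_shift G x i j hij ε]
      have hkey : 0 < ε * D j - ε * D i - ε ^ 2 * c := by
        nlinarith [mul_lt_mul_of_pos_left hεc hε0]
      have hDj' : ∑ e ∈ G.edges.filter (fun e => j ∈ e), ∏ k ∈ e.erase j, x k = D j := rfl
      have hDi' : ∑ e ∈ G.edges.filter (fun e => i ∈ e), ∏ k ∈ e.erase i, x k = D i := rfl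
      have hc' : ∑ e ∈ G.edges.filter (fun e => i ∈ e ∧ j ∈ e),
          ∏ k ∈ (e.erase i).erase j, x k = c := rfl
      rw [hDj', hDi', hc']
      linarith
    have := le_lagrangian G y hyw
    rw [← hopt] at this
    linarith
  -- bound D i
  have hxile : x i ≤ 1 := by
    calc x i ≤ ∑ l ∈ G.verts, x l := Finset.single_le_sum (fun l _ => hw.1 l) hiv
      _ = 1 := hw.2
  have hDi : D i ≤ 2 / 9 := by
    have hinj : ∀ e ∈ G.edges.filter (fun e => i ∈ e), ∀ e' ∈ G.edges.filter (fun e => i ∈ e),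
        e.erase i = e'.erase i → e = e' := by
      intro e he e' he' h
      have hie : i ∈ e := (Finset.mem_filter.mp he).2
      have hie' : i ∈ e' := (Finset.mem_filter.mp he').2
      rw [← Finset.insert_erase hie, ← Finset.insert_erase hie', h]
    have himg : (G.edges.filter (fun e => i ∈ e)).image (fun e => e.erase i)
        ⊆ (G.verts.erase i).powersetCard 2 := by
      intro S hS
      obtain ⟨e, he, rfl⟩ := Finset.mem_image.mp hS
      have he' := Finset.mem_filter.mp he
      rw [Finset.mem_powersetCard]
      constructor
      · exact Finset.erase_subset_erase i (G.edge_sub e he'.1)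
      · rw [Finset.card_erase_of_mem he'.2, h3 e he'.1]
    have h1 : D i = ∑ S ∈ (G.edges.filter (fun e => i ∈ e)).image (fun e => e.erase i),
        ∏ k ∈ S, x k := by
      rw [hD, Finset.sum_image hinj]
    have h2 : D i ≤ ∑ S ∈ (G.verts.erase i).powersetCard 2, ∏ k ∈ S, x k := by
      rw [h1]
      apply Finset.sum_le_sum_of_subset_of_nonneg himg
      intro S _ _
      exact Finset.prod_nonneg (fun k _ => hw.1 k)
    have h3' := pair_sum_bound (G.verts.erase i) x hw.1
    have h4 : ∑ k ∈ G.verts.erase i, x k = 1 - x i := by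
      have := Finset.add_sum_erase _ x hiv
      rw [hw.2] at this
      linarith
    rw [h4] at h3'
    nlinarith
  -- conclude
  have h3lam : 3 * G.lagrangianAt x ≤ D i := by
    rw [← heuler]
    calc ∑ j ∈ G.verts, x j * D j ≤ ∑ j ∈ G.verts, x j * D i := by
          apply Finset.sum_le_sum
          intro j hj
          exact mul_le_mul_of_nonneg_left (hmax j hj) (hw.1 j)
      _ = (∑ j ∈ G.verts, x j) * D i := by rw [Finset.sum_mul]
      _ = D i := by rw [hw.2, one_mul]
  rw [← hopt]
  linarith
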